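/- arXiv:2011.05000 — 2 statements merged into one kernel-verified Lean document; each statement's English description precedes it below -/
import Mathlib

section
/- (Krawczyk existence) Let F : ℂⁿ → ℂⁿ be a polynomial system, I a product of rectangular complex intervals, x ∈ I, and Y ∈ ℂ^{n×n} invertible. Let □F and □JF be interval enclosures of F and its Jacobian JF. If the Krawczyk set K_{x,Y}(I) = x − Y·□F(x) + (1ₙ − Y·□JF(I))(I − x) is contained in I, then F has a zero in I. -/
open Set Pointwise

noncomputable section

/-- Pointwise addition of sets of reals. -/
def sadd (X Y : Set ℝ) : Set ℝ := Set.image2 (· + ·) X Y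

/-- Pointwise subtraction of sets of reals. -/
def ssub (X Y : Set ℝ) : Set ℝ := Set.image2 (· - ·) X Y

/-- Pointwise multiplication of sets of reals. -/
def smul' (X Y : Set ℝ) : Set ℝ := Set.image2 (· * ·) X Y

/-- The rectangular complex interval `X + iY`. -/
def cI (X Y : Set ℝ) : Set ℂ := {z | z.re ∈ X ∧ z.im ∈ Y}

/-- Real parts of a set of complex numbers. -/
def reS (S : Set ℂ) : Set ℝ := Complex.re '' S

/-- Imaginary parts of a set of complex numbers. -/
def imS (S : Set ℂ) : Set ℝ := Complex.im '' S

/-- Complex interval multiplication: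
`(X+iY)·(W+iZ) = (X·W − Y·Z) + i(X·Z + Y·W)`. -/
def cmul (S T : Set ℂ) : Set ℂ :=
  cI (ssub (smul' (reS S) (reS T)) (smul' (imS S) (imS T)))
     (sadd (smul' (reS S) (imS T)) (smul' (imS S) (reS T)))

/-- `S` is a rectangular complex interval. -/
def IsRect (S : Set ℂ) : Prop :=
  ∃ a b c d : ℝ, a ≤ b ∧ c ≤ d ∧ S = cI (Set.Icc a b) (Set.Icc c d)

variable {n : ℕ}

/-- The interval vector `I ∈ 𝕀ℂⁿ` determined by coordinate intervals `IV`. -/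
def boxSet (IV : Fin n → Set ℂ) : Set (Fin n → ℂ) := {z | ∀ j, z j ∈ IV j}

/-- `F` is a square polynomial system. -/
def IsPolyMap (F : (Fin n → ℂ) → Fin n → ℂ) : Prop :=
  ∀ i, ∃ p : MvPolynomial (Fin n) ℂ, ∀ z, F z i = MvPolynomial.eval z p

/-- The Jacobian matrix `JF(z)` of `F` at `z`. -/
def jac (F : (Fin n → ℂ) → Fin n → ℂ) (z : Fin n → ℂ) : Matrix (Fin n) (Fin n) ℂ :=
  fun i j => fderiv ℂ (fun w => F w i) z (Pi.single j 1)

/-- Entries of the interval matrix `1ₙ − Y·□JF(I)`, where `MJ` is the interval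
enclosure of the Jacobian on `I`, computed in complex interval arithmetic. -/
def Bmat (Y : Matrix (Fin n) (Fin n) ℂ) (MJ : Fin n → Fin n → Set ℂ) :
    Fin n → Fin n → Set ℂ :=
  fun i j => ({(if i = j then (1 : ℂ) else 0)} : Set ℂ) - ∑ k, cmul {Y i k} (MJ k j)

/-- Coordinates of the Krawczyk set
`K_{x,Y}(I) = x − Y·□F(x) + (1ₙ − Y·□JF(I))(I − x)`, where `FX` is the interval
enclosure `□F(x)` and `MJ` the interval enclosure `□JF(I)`. -/
def Kset (x : Fin n → ℂ) (Y : Matrix (Fin n) (Fin n) ℂ)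
    (FX : Fin n → Set ℂ) (MJ : Fin n → Fin n → Set ℂ) (IV : Fin n → Set ℂ) :
    Fin n → Set ℂ :=
  fun i => (({x i} : Set ℂ) - ∑ j, cmul {Y i j} (FX j)) +
      ∑ j, cmul ((IV j) - {x j}) (Bmat Y MJ i j)

/-- The `∞`-operator norm of a complex matrix (`Fin n → ℂ` carries the max norm). -/
def opNormInf (M : Matrix (Fin n) (Fin n) ℂ) : ℝ :=
  sSup {r | ∃ v : Fin n → ℂ, ‖v‖ = 1 ∧ r = ‖M.mulVec v‖}

/-- The norm `‖A‖_∞` of an interval matrix: the maximum of the `∞`-operator norms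
over all matrices contained in it. -/
def imatNorm (B : Fin n → Fin n → Set ℂ) : ℝ :=
  sSup {r | ∃ M : Matrix (Fin n) (Fin n) ℂ, (∀ i j, M i j ∈ B i j) ∧ r = opNormInf M}

/-! ### Auxiliary lemmas for the proof -/

section Aux

open MvPolynomial

/-- compact and nonempty -/
def Cpt {α : Type*} [TopologicalSpace α] (S : Set α) : Prop := IsCompact S ∧ S.Nonempty

lemma sadd_eq (X Y : Set ℝ) : sadd X Y = X + Y := image2_add
lemma ssub_eq (X Y : Set ℝ) : ssub X Y = X - Y := image2_sub
lemma smul'_eq (X Y : Set ℝ) : smul' X Y = X * Y := image2_mul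

lemma Cpt.image2 {α β γ : Type*} [TopologicalSpace α] [TopologicalSpace β] [TopologicalSpace γ]
    {f : α → β → γ} (hf : Continuous (fun p : α × β => f p.1 p.2))
    {S : Set α} {T : Set β} (hS : Cpt S) (hT : Cpt T) : Cpt (Set.image2 f S T) := by
  constructor
  · rw [← Set.image_uncurry_prod]
    exact (hS.1.prod hT.1).image hf
  · exact hS.2.image2 hT.2

lemma Cpt.sadd {S T : Set ℝ} (hS : Cpt S) (hT : Cpt T) : Cpt (sadd S T) :=
  Cpt.image2 (by continuity) hS hT
lemma Cpt.ssub {S T : Set ℝ} (hS : Cpt S) (hT : Cpt T) : Cpt (ssub S T) :=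
  Cpt.image2 (by continuity) hS hT
lemma Cpt.smul' {S T : Set ℝ} (hS : Cpt S) (hT : Cpt T) : Cpt (smul' S T) :=
  Cpt.image2 (by continuity) hS hT
lemma Cpt.reS {S : Set ℂ} (hS : Cpt S) : Cpt (reS S) :=
  ⟨hS.1.image Complex.continuous_re, hS.2.image _⟩
lemma Cpt.imS {S : Set ℂ} (hS : Cpt S) : Cpt (imS S) :=
  ⟨hS.1.image Complex.continuous_im, hS.2.image _⟩

lemma cI_eq_image (X Y : Set ℝ) :
    cI X Y = (fun p : ℝ × ℝ => (p.1 : ℂ) + (p.2 : ℂ) * Complex.I) '' (X ×ˢ Y) := by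
  ext z
  constructor
  · rintro ⟨h1, h2⟩
    exact ⟨(z.re, z.im), ⟨h1, h2⟩, by simp [Complex.ext_iff]⟩
  · rintro ⟨⟨a, b⟩, ⟨ha, hb⟩, rfl⟩
    constructor <;> simp [ha, hb]

lemma Cpt.cI {X Y : Set ℝ} (hX : Cpt X) (hY : Cpt Y) : Cpt (cI X Y) := by
  rw [cI_eq_image]
  exact ⟨(hX.1.prod hY.1).image (by continuity), (hX.2.prod hY.2).image _⟩

lemma Cpt.cmul {S T : Set ℂ} (hS : Cpt S) (hT : Cpt T) : Cpt (cmul S T) :=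
  Cpt.cI ((hS.reS.smul' hT.reS).ssub (hS.imS.smul' hT.imS))
    ((hS.reS.smul' hT.imS).sadd (hS.imS.smul' hT.reS))

lemma Cpt.singleton {α : Type*} [TopologicalSpace α] (a : α) : Cpt ({a} : Set α) :=
  ⟨isCompact_singleton, ⟨a, rfl⟩⟩

lemma Cpt.rect {S : Set ℂ} (hS : IsRect S) : Cpt S := by
  obtain ⟨a, b, c, d, hab, hcd, rfl⟩ := hS
  exact Cpt.cI ⟨isCompact_Icc, Set.nonempty_Icc.2 hab⟩ ⟨isCompact_Icc, Set.nonempty_Icc.2 hcd⟩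

variable {E : Type*} [AddCommMonoid E] [TopologicalSpace E] [ContinuousAdd E]
variable {G' : Type*} [AddCommGroup G'] [TopologicalSpace G'] [IsTopologicalAddGroup G']

lemma Cpt.addS {S T : Set E} (hS : Cpt S) (hT : Cpt T) : Cpt (S + T) := by
  rw [← Set.image2_add]; exact Cpt.image2 continuous_add hS hT
lemma Cpt.subS {S T : Set G'} (hS : Cpt S) (hT : Cpt T) : Cpt (S - T) := by
  rw [← Set.image2_sub]; exact Cpt.image2 continuous_sub hS hT

lemma Cpt.sum {ι : Type*} {s : Finset ι} {f : ι → Set E} (h : ∀ j ∈ s, Cpt (f j)) :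
    Cpt (∑ j ∈ s, f j) := by
  classical
  induction s using Finset.cons_induction with
  | empty => rw [Finset.sum_empty]; exact Cpt.singleton (0 : E)
  | cons a s ha ih =>
    rw [Finset.sum_cons]
    exact (h a (Finset.mem_cons_self a s)).addS (ih fun j hj => h j (Finset.mem_cons_of_mem hj))

lemma mem_sum_sets {ι : Type*} {s : Finset ι} {f : ι → Set E} {g : ι → E}
    (h : ∀ j ∈ s, g j ∈ f j) : (∑ j ∈ s, g j) ∈ (∑ j ∈ s, f j) := by
  classical
  induction s using Finset.cons_induction with
  | empty => simp
  | cons a s ha ih =>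
    rw [Finset.sum_cons, Finset.sum_cons]
    exact Set.add_mem_add (h a (Finset.mem_cons_self a s))
      (ih fun j hj => h j (Finset.mem_cons_of_mem hj))

lemma cmul_mem {S T : Set ℂ} {a b : ℂ} (ha : a ∈ S) (hb : b ∈ T) : a * b ∈ cmul S T := by
  refine ⟨⟨a.re * b.re, ⟨a.re, ⟨a, ha, rfl⟩, b.re, ⟨b, hb, rfl⟩, rfl⟩,
      a.im * b.im, ⟨a.im, ⟨a, ha, rfl⟩, b.im, ⟨b, hb, rfl⟩, rfl⟩, by simp [Complex.mul_re]⟩,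
    ⟨a.re * b.im, ⟨a.re, ⟨a, ha, rfl⟩, b.im, ⟨b, hb, rfl⟩, rfl⟩,
      a.im * b.re, ⟨a.im, ⟨a, ha, rfl⟩, b.re, ⟨b, hb, rfl⟩, rfl⟩, by simp [Complex.mul_im]⟩⟩

/-- width of a set of reals -/
def wid (S : Set ℝ) : ℝ := sSup S - sInf S
/-- magnitude of a set of reals -/
def mag (S : Set ℝ) : ℝ := sSup (abs '' S)

lemma sub_le_wid {S : Set ℝ} (hS : Cpt S) {a b : ℝ} (ha : a ∈ S) (hb : b ∈ S) :
    a - b ≤ wid S :=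
  sub_le_sub (le_csSup hS.1.bddAbove ha) (csInf_le hS.1.bddBelow hb)

lemma wid_nonneg {S : Set ℝ} (hS : Cpt S) : 0 ≤ wid S := by
  obtain ⟨a, ha⟩ := hS.2
  simpa using sub_le_wid hS ha ha

lemma wid_mono {S T : Set ℝ} (hT : Cpt T) (hS : S.Nonempty) (h : S ⊆ T) : wid S ≤ wid T :=
  sub_le_sub (csSup_le_csSup hT.1.bddAbove hS h) (csInf_le_csInf hT.1.bddBelow hS h)

lemma abs_le_mag {T : Set ℝ} (hT : Cpt T) {t : ℝ} (ht : t ∈ T) : |t| ≤ mag T :=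
  le_csSup (hT.1.image continuous_abs).bddAbove ⟨t, ht, rfl⟩

lemma mag_nonneg {T : Set ℝ} (hT : Cpt T) : 0 ≤ mag T := by
  obtain ⟨t, ht⟩ := hT.2
  exact le_trans (abs_nonneg t) (abs_le_mag hT ht)

lemma wid_add_ge {S T : Set ℝ} (hS : Cpt S) (hT : Cpt T) : wid S + wid T ≤ wid (sadd S T) := by
  have h1 : sSup S + sSup T - (sInf S + sInf T) ≤ wid (sadd S T) :=
    sub_le_wid (hS.sadd hT)
      ⟨sSup S, hS.1.sSup_mem hS.2, sSup T, hT.1.sSup_mem hT.2, rfl⟩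
      ⟨sInf S, hS.1.sInf_mem hS.2, sInf T, hT.1.sInf_mem hT.2, rfl⟩
  unfold wid at *; linarith

lemma wid_sub_ge {S T : Set ℝ} (hS : Cpt S) (hT : Cpt T) : wid S + wid T ≤ wid (ssub S T) := by
  have h1 : (sSup S - sInf T) - (sInf S - sSup T) ≤ wid (ssub S T) :=
    sub_le_wid (hS.ssub hT)
      ⟨sSup S, hS.1.sSup_mem hS.2, sInf T, hT.1.sInf_mem hT.2, rfl⟩
      ⟨sInf S, hS.1.sInf_mem hS.2, sSup T, hT.1.sSup_mem hT.2, rfl⟩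
  unfold wid at *; linarith

lemma wid_mul_ge {S T : Set ℝ} (hS : Cpt S) (hT : Cpt T) : mag T * wid S ≤ wid (smul' S T) := by
  have hmem : mag T ∈ abs '' T := (hT.1.image continuous_abs).sSup_mem (hT.2.image _)
  obtain ⟨q, hq, hqe⟩ := hmem
  have h1 : sSup S * q - sInf S * q ≤ wid (smul' S T) :=
    sub_le_wid (hS.smul' hT) ⟨sSup S, hS.1.sSup_mem hS.2, q, hq, rfl⟩
      ⟨sInf S, hS.1.sInf_mem hS.2, q, hq, rfl⟩
  have h2 : sInf S * q - sSup S * q ≤ wid (smul' S T) :=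
    sub_le_wid (hS.smul' hT) ⟨sInf S, hS.1.sInf_mem hS.2, q, hq, rfl⟩
      ⟨sSup S, hS.1.sSup_mem hS.2, q, hq, rfl⟩
  have hw : 0 ≤ wid S := wid_nonneg hS
  have : mag T * wid S = |q * (sSup S - sInf S)| := by
    rw [abs_mul, hqe]
    unfold wid at hw ⊢
    rw [abs_of_nonneg hw]
  rw [this]
  rcases abs_cases (q * (sSup S - sInf S)) with ⟨he, _⟩ | ⟨he, _⟩ <;> rw [he] <;> nlinarith

lemma wid_sum_ge {ι : Type*} {s : Finset ι} {f : ι → Set ℝ} (h : ∀ j ∈ s, Cpt (f j)) :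
    ∑ j ∈ s, wid (f j) ≤ wid (∑ j ∈ s, f j) := by
  classical
  induction s using Finset.cons_induction with
  | empty =>
    simp [wid]
  | cons a s ha ih =>
    rw [Finset.sum_cons, Finset.sum_cons]
    calc wid (f a) + ∑ j ∈ s, wid (f j)
        ≤ wid (f a) + wid (∑ j ∈ s, f j) := by
          have := ih fun j hj => h j (Finset.mem_cons_of_mem hj)
          linarith
      _ ≤ wid (sadd (f a) (∑ j ∈ s, f j)) :=
          wid_add_ge (h a (Finset.mem_cons_self a s))
            (Cpt.sum fun j hj => h j (Finset.mem_cons_of_mem hj))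
      _ = wid (f a + ∑ j ∈ s, f j) := by rw [sadd_eq]

lemma wid_singleton (a : ℝ) : wid ({a} : Set ℝ) = 0 := by simp [wid]

lemma reS_cI {X Y : Set ℝ} (hY : Y.Nonempty) : reS (cI X Y) = X := by
  ext a
  constructor
  · rintro ⟨z, ⟨h1, _⟩, rfl⟩; exact h1
  · intro ha
    obtain ⟨b, hb⟩ := hY
    exact ⟨(a : ℂ) + (b : ℂ) * Complex.I, ⟨by simpa using ha, by simpa using hb⟩, by simp⟩

lemma imS_cI {X Y : Set ℝ} (hX : X.Nonempty) : imS (cI X Y) = Y := by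
  ext b
  constructor
  · rintro ⟨z, ⟨_, h2⟩, rfl⟩; exact h2
  · intro hb
    obtain ⟨a, ha⟩ := hX
    exact ⟨(a : ℂ) + (b : ℂ) * Complex.I, ⟨by simpa using ha, by simpa using hb⟩, by simp⟩

lemma reS_add (S T : Set ℂ) : reS (S + T) = reS S + reS T := by
  ext a
  constructor
  · rintro ⟨z, ⟨s, hs, t, ht, rfl⟩, rfl⟩
    exact ⟨s.re, ⟨s, hs, rfl⟩, t.re, ⟨t, ht, rfl⟩, by simp⟩
  · rintro ⟨x, ⟨s, hs, rfl⟩, y, ⟨t, ht, rfl⟩, rfl⟩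
    exact ⟨s + t, Set.add_mem_add hs ht, by simp⟩

lemma reS_sub (S T : Set ℂ) : reS (S - T) = ssub (reS S) (reS T) := by
  ext a
  constructor
  · rintro ⟨z, ⟨s, hs, t, ht, rfl⟩, rfl⟩
    exact ⟨s.re, ⟨s, hs, rfl⟩, t.re, ⟨t, ht, rfl⟩, by simp⟩
  · rintro ⟨x, ⟨s, hs, rfl⟩, y, ⟨t, ht, rfl⟩, rfl⟩
    exact ⟨s - t, Set.sub_mem_sub hs ht, by simp⟩

lemma imS_sub (S T : Set ℂ) : imS (S - T) = ssub (imS S) (imS T) := by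
  ext a
  constructor
  · rintro ⟨z, ⟨s, hs, t, ht, rfl⟩, rfl⟩
    exact ⟨s.im, ⟨s, hs, rfl⟩, t.im, ⟨t, ht, rfl⟩, by simp⟩
  · rintro ⟨x, ⟨s, hs, rfl⟩, y, ⟨t, ht, rfl⟩, rfl⟩
    exact ⟨s - t, Set.sub_mem_sub hs ht, by simp⟩

lemma reS_singleton (a : ℂ) : reS ({a} : Set ℂ) = {a.re} := by simp [reS]
lemma imS_singleton (a : ℂ) : imS ({a} : Set ℂ) = {a.im} := by simp [imS]

lemma reS_sum {ι : Type*} (s : Finset ι) (f : ι → Set ℂ) :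
    reS (∑ j ∈ s, f j) = ∑ j ∈ s, reS (f j) := by
  classical
  induction s using Finset.cons_induction with
  | empty =>
    rw [Finset.sum_empty, Finset.sum_empty]
    show reS ({0} : Set ℂ) = ({0} : Set ℝ); rw [reS_singleton, Complex.zero_re]
  | cons a s ha ih => rw [Finset.sum_cons, Finset.sum_cons, reS_add, ih]

/-- The derivative CLM of polynomial evaluation. -/
def pderivL (p : MvPolynomial (Fin n) ℂ) (z : Fin n → ℂ) : (Fin n → ℂ) →L[ℂ] ℂ :=
  ∑ j, MvPolynomial.eval z (pderiv j p) • (ContinuousLinearMap.proj j :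
    (Fin n → ℂ) →L[ℂ] ℂ)

lemma pderivL_apply (p : MvPolynomial (Fin n) ℂ) (z v : Fin n → ℂ) :
    pderivL p z v = ∑ j, MvPolynomial.eval z (pderiv j p) * v j := by
  simp [pderivL, ContinuousLinearMap.sum_apply, ContinuousLinearMap.proj_apply, smul_eq_mul]

lemma hasFDerivAt_eval (p : MvPolynomial (Fin n) ℂ) (z : Fin n → ℂ) :
    HasFDerivAt (fun w => MvPolynomial.eval w p) (pderivL p z) z := by
  induction p using MvPolynomial.induction_on generalizing z with
  | C a =>
    have : pderivL (C a : MvPolynomial (Fin n) ℂ) z = 0 := by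
      ext v; simp [pderivL_apply]
    rw [this]
    simpa using hasFDerivAt_const (𝕜 := ℂ) a z
  | add p q hp hq =>
    have h := (hp z).add (hq z)
    have he : pderivL (p + q) z = pderivL p z + pderivL q z := by
      ext v; simp [pderivL_apply, Finset.sum_add_distrib, add_mul]
    rw [he]
    refine h.congr_of_eventuallyEq (Filter.Eventually.of_forall fun w => ?_)
    simp
  | mul_X p j hp =>
    have hj : HasFDerivAt (fun w : Fin n → ℂ => w j)
        (ContinuousLinearMap.proj j : (Fin n → ℂ) →L[ℂ] ℂ) z :=
      (ContinuousLinearMap.proj j : (Fin n → ℂ) →L[ℂ] ℂ).hasFDerivAt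
    have h := (hp z).mul hj
    have he : pderivL (p * X j) z = (MvPolynomial.eval z p) •
        (ContinuousLinearMap.proj j : (Fin n → ℂ) →L[ℂ] ℂ) + z j • pderivL p z := by
      ext v
      simp only [ContinuousLinearMap.add_apply, ContinuousLinearMap.smul_apply,
        ContinuousLinearMap.proj_apply, smul_eq_mul, pderivL_apply]
      have : ∀ k, MvPolynomial.eval z (pderiv k (p * X j)) * v k =
          (MvPolynomial.eval z (pderiv k p) * z j) * v k +
          (MvPolynomial.eval z p * (if j = k then 1 else 0)) * v k := by
        intro k
        rw [pderiv_mul, pderiv_X]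
        simp only [map_add, map_mul, eval_X]
        by_cases hk : j = k <;> simp [hk, Pi.single_apply] <;> ring
      rw [Finset.sum_congr rfl fun k _ => this k, Finset.sum_add_distrib]
      have h1 : ∑ k, (MvPolynomial.eval z p * (if j = k then 1 else 0)) * v k
          = MvPolynomial.eval z p * v j := by
        rw [Finset.sum_eq_single j]
        · simp
        · intro b _ hbj
          simp [Ne.symm hbj]
        · intro h
          exact absurd (Finset.mem_univ j) h
      have h2 : ∑ k, (MvPolynomial.eval z (pderiv k p) * z j) * v k
          = z j * ∑ k, MvPolynomial.eval z (pderiv k p) * v k := by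
        rw [Finset.mul_sum]
        exact Finset.sum_congr rfl fun k _ => by ring
      rw [h1, h2, add_comm]
    rw [he]
    refine h.congr_of_eventuallyEq (Filter.Eventually.of_forall fun w => ?_)
    simp

lemma continuous_eval (p : MvPolynomial (Fin n) ℂ) :
    Continuous (fun w : Fin n → ℂ => MvPolynomial.eval w p) :=
  continuous_iff_continuousAt.2 fun z => (hasFDerivAt_eval p z).differentiableAt.continuousAt

lemma jac_eq {F : (Fin n → ℂ) → Fin n → ℂ} {i : Fin n} {p : MvPolynomial (Fin n) ℂ}
    (hp : ∀ z, F z i = MvPolynomial.eval z p) (z : Fin n → ℂ) (j : Fin n) :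
    jac F z i j = MvPolynomial.eval z (pderiv j p) := by
  have h : (fun w => F w i) = fun w => MvPolynomial.eval w p := funext hp
  have : fderiv ℂ (fun w => F w i) z = pderivL p z := by
    rw [h]; exact (hasFDerivAt_eval p z).fderiv
  rw [jac, this, pderivL_apply]
  rw [Finset.sum_eq_single j]
  · simp
  · intro b _ hbj; simp [Pi.single_apply, hbj]
  · intro h; exact absurd (Finset.mem_univ j) h

/-- the segment stays in the box -/
lemma seg_mem_box {IV : Fin n → Set ℂ} (hIV : ∀ j, IsRect (IV j))
    {z w : Fin n → ℂ} (hz : z ∈ boxSet IV) (hw : w ∈ boxSet IV)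
    {t : ℝ} (ht : t ∈ Set.Icc (0:ℝ) 1) : (w + t • (z - w)) ∈ boxSet IV := by
  intro j
  obtain ⟨a, b, c, d, _, _, hE⟩ := hIV j
  have hzj := hz j
  have hwj := hw j
  rw [hE] at hzj hwj ⊢
  obtain ⟨hz1, hz2⟩ := hzj
  obtain ⟨hw1, hw2⟩ := hwj
  have hre : ((w + t • (z - w)) j).re = (1 - t) * (w j).re + t * (z j).re := by
    simp [Complex.smul_re, Complex.sub_re]; ring
  have him : ((w + t • (z - w)) j).im = (1 - t) * (w j).im + t * (z j).im := by
    simp [Complex.smul_im, Complex.sub_im]; ring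
  constructor
  · rw [hre]
    exact (convex_Icc a b) hw1 hz1 (by linarith [ht.1, ht.2]) ht.1 (by ring)
  · rw [him]
    exact (convex_Icc c d) hw2 hz2 (by linarith [ht.1, ht.2]) ht.1 (by ring)

lemma integral_mem_Icc {f : ℝ → ℝ} (hf : Continuous f) {a b : ℝ}
    (h : ∀ t ∈ Set.Icc (0:ℝ) 1, f t ∈ Set.Icc a b) :
    (∫ t in (0:ℝ)..1, f t) ∈ Set.Icc a b := by
  have hif : IntervalIntegrable f MeasureTheory.volume 0 1 := hf.intervalIntegrable 0 1
  have h1 : (∫ _ in (0:ℝ)..1, a) ≤ ∫ t in (0:ℝ)..1, f t := by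
    apply intervalIntegral.integral_mono_on (by norm_num)
      (intervalIntegrable_const) hif
    exact fun t ht => (h t ht).1
  have h2 : (∫ t in (0:ℝ)..1, f t) ≤ ∫ _ in (0:ℝ)..1, b := by
    apply intervalIntegral.integral_mono_on (by norm_num) hif intervalIntegrable_const
    exact fun t ht => (h t ht).2
  simp only [intervalIntegral.integral_const, sub_zero, one_smul, smul_eq_mul, one_mul] at h1 h2
  exact ⟨h1, h2⟩

/-- Mean value representation with matrix entries in MJ. -/
lemma mvt_matrix {F : (Fin n → ℂ) → Fin n → ℂ} (hF : IsPolyMap F)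
    {IV : Fin n → Set ℂ} (hIV : ∀ j, IsRect (IV j))
    {MJ : Fin n → Fin n → Set ℂ} (hMJr : ∀ i j, IsRect (MJ i j))
    (hMJ : ∀ y ∈ boxSet IV, ∀ i j, jac F y i j ∈ MJ i j)
    {z w : Fin n → ℂ} (hz : z ∈ boxSet IV) (hw : w ∈ boxSet IV) :
    ∃ M : Matrix (Fin n) (Fin n) ℂ, (∀ i j, M i j ∈ MJ i j) ∧
      ∀ i, F z i - F w i = ∑ j, M i j * (z j - w j) := by
  classical
  choose p hp using hF
  set γ : ℝ → Fin n → ℂ := fun t => w + t • (z - w) with hγ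
  have hγc : Continuous γ := by
    apply Continuous.add continuous_const
    exact (continuous_id.smul continuous_const)
  have hγ0 : γ 0 = w := by simp [hγ]
  have hγ1 : γ 1 = z := by simp [hγ]
  have hγbox : ∀ t ∈ Set.Icc (0:ℝ) 1, γ t ∈ boxSet IV := fun t ht => seg_mem_box hIV hz hw ht
  set M : Matrix (Fin n) (Fin n) ℂ :=
    fun i j => ∫ t in (0:ℝ)..1, MvPolynomial.eval (γ t) (pderiv j (p i)) with hM
  have hcont : ∀ i j, Continuous fun t => MvPolynomial.eval (γ t) (pderiv j (p i)) :=
    fun i j => (continuous_eval _).comp hγc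
  refine ⟨M, ?_, ?_⟩
  · intro i j
    obtain ⟨a, b, c, d, hab, hcd, hE⟩ := hMJr i j
    have hmem : ∀ t ∈ Set.Icc (0:ℝ) 1,
        MvPolynomial.eval (γ t) (pderiv j (p i)) ∈ MJ i j := by
      intro t ht
      rw [← jac_eq (hp i) (γ t) j]
      exact hMJ (γ t) (hγbox t ht) i j
    rw [hE]
    have hint : IntervalIntegrable (fun t => MvPolynomial.eval (γ t) (pderiv j (p i)))
        MeasureTheory.volume 0 1 := (hcont i j).intervalIntegrable 0 1
    have hreM : (M i j).re = ∫ t in (0:ℝ)..1,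
        (MvPolynomial.eval (γ t) (pderiv j (p i))).re := by
      rw [hM]
      exact (Complex.reCLM.intervalIntegral_comp_comm hint).symm
    have himM : (M i j).im = ∫ t in (0:ℝ)..1,
        (MvPolynomial.eval (γ t) (pderiv j (p i))).im := by
      rw [hM]
      exact (Complex.imCLM.intervalIntegral_comp_comm hint).symm
    constructor
    · rw [hreM]
      apply integral_mem_Icc (Complex.continuous_re.comp (hcont i j))
      intro t ht
      have := hmem t ht
      rw [hE] at this
      exact this.1
    · rw [himM]
      apply integral_mem_Icc (Complex.continuous_im.comp (hcont i j))
      intro t ht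
      have := hmem t ht
      rw [hE] at this
      exact this.2
  · intro i
    have hderiv : ∀ t ∈ Set.uIcc (0:ℝ) 1,
        HasDerivAt (fun s => MvPolynomial.eval (γ s) (p i))
          (∑ j, MvPolynomial.eval (γ t) (pderiv j (p i)) * (z j - w j)) t := by
      intro t _
      have hγd : HasDerivAt γ (z - w) t := by
        have h1 : HasDerivAt (fun s : ℝ => s • (z - w)) ((1:ℝ) • (z - w)) t :=
          (hasDerivAt_id t).smul_const (z - w)
        have h1' := h1.const_add w; simp only [one_smul] at h1'; exact h1'
      have h := ((hasFDerivAt_eval (p i) (γ t)).restrictScalars ℝ).comp_hasDerivAt t hγd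
      refine h.congr_deriv ?_
      rw [ContinuousLinearMap.coe_restrictScalars', pderivL_apply]
      simp [Pi.sub_apply]
    have hint2 : IntervalIntegrable
        (fun t => ∑ j, MvPolynomial.eval (γ t) (pderiv j (p i)) * (z j - w j))
        MeasureTheory.volume 0 1 := by
      apply Continuous.intervalIntegrable
      exact continuous_finset_sum _ fun j _ => (hcont i j).mul continuous_const
    have hFTC := intervalIntegral.integral_eq_sub_of_hasDerivAt hderiv hint2
    rw [hγ1, hγ0] at hFTC
    rw [hp i z, hp i w, ← hFTC]
    rw [intervalIntegral.integral_finset_sum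
      (f := fun j t => MvPolynomial.eval (γ t) (pderiv j (p i)) * (z j - w j))
      (fun j _ => ((hcont i j).mul continuous_const).intervalIntegrable 0 1)]
    exact Finset.sum_congr rfl fun j _ => intervalIntegral.integral_mul_const _ _

/-- algebraic identity for the Krawczyk operator -/
lemma G_repr (Y M : Matrix (Fin n) (Fin n) ℂ) (Fz Fx : Fin n → ℂ) (z x : Fin n → ℂ)
    (hMVT : ∀ i, Fz i - Fx i = ∑ j, M i j * (z j - x j)) (i : Fin n) :
    z i - ∑ j, Y i j * Fz j =
      (x i - ∑ j, Y i j * Fx j) + ∑ j, (z j - x j) * ((1 - Y * M) i j) := by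
  have h1 : ∀ j, (z j - x j) * ((1 - Y * M) i j) =
      (z j - x j) * (if i = j then 1 else 0) - ∑ k, Y i k * (M k j * (z j - x j)) := by
    intro j
    rw [Matrix.sub_apply, Matrix.one_apply, Matrix.mul_apply, mul_sub, Finset.mul_sum]
    congr 1
    exact Finset.sum_congr rfl fun k _ => by ring
  rw [Finset.sum_congr rfl fun j _ => h1 j, Finset.sum_sub_distrib]
  have h2 : ∑ j, (z j - x j) * (if i = j then 1 else 0) = z i - x i := by
    rw [Finset.sum_eq_single i]
    · simp
    · intro b _ hbi; simp [Ne.symm hbi]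
    · intro h; exact absurd (Finset.mem_univ i) h
  have h3 : ∑ j, ∑ k, Y i k * (M k j * (z j - x j))
      = ∑ k, Y i k * (Fz k - Fx k) := by
    rw [Finset.sum_comm]
    apply Finset.sum_congr rfl
    intro k _
    rw [hMVT k, Finset.mul_sum]
  rw [h2, h3]
  have h4 : ∑ j, Y i j * Fz j = ∑ j, Y i j * Fx j + ∑ k, Y i k * (Fz k - Fx k) := by
    rw [← Finset.sum_add_distrib]
    exact Finset.sum_congr rfl fun j _ => by ring
  rw [h4]
  ring

lemma imS_add (S T : Set ℂ) : imS (S + T) = imS S + imS T := by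
  ext a
  constructor
  · rintro ⟨z, ⟨s, hs, t, ht, rfl⟩, rfl⟩
    exact ⟨s.im, ⟨s, hs, rfl⟩, t.im, ⟨t, ht, rfl⟩, by simp⟩
  · rintro ⟨x, ⟨s, hs, rfl⟩, y, ⟨t, ht, rfl⟩, rfl⟩
    exact ⟨s + t, Set.add_mem_add hs ht, by simp⟩

lemma imS_sum {ι : Type*} (s : Finset ι) (f : ι → Set ℂ) :
    imS (∑ j ∈ s, f j) = ∑ j ∈ s, imS (f j) := by
  classical
  induction s using Finset.cons_induction with
  | empty =>
    rw [Finset.sum_empty, Finset.sum_empty]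
    show imS ({0} : Set ℂ) = ({0} : Set ℝ); rw [imS_singleton, Complex.zero_im]
  | cons a s ha ih => rw [Finset.sum_cons, Finset.sum_cons, imS_add, ih]

lemma abs_mul_sub_mul_le {a b c d A B C D : ℝ} (ha : |a| ≤ A) (hb : |b| ≤ B)
    (hc : |c| ≤ C) (hd : |d| ≤ D) : |a * c - b * d| ≤ A * C + B * D := by
  have h1 : |a * c - b * d| ≤ |a * c| + |b * d| := by
    calc |a * c - b * d| = |a * c + -(b * d)| := by ring_nf
      _ ≤ |a * c| + |-(b * d)| := abs_add_le _ _
      _ = |a * c| + |b * d| := by rw [abs_neg]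
  rw [abs_mul, abs_mul] at h1
  have h2 : |a| * |c| ≤ A * C :=
    mul_le_mul ha hc (abs_nonneg c) ((abs_nonneg a).trans ha)
  have h3 : |b| * |d| ≤ B * D :=
    mul_le_mul hb hd (abs_nonneg d) ((abs_nonneg b).trans hb)
  linarith

lemma abs_mul_add_mul_le {a b c d A B C D : ℝ} (ha : |a| ≤ A) (hb : |b| ≤ B)
    (hc : |c| ≤ C) (hd : |d| ≤ D) : |a * c + b * d| ≤ A * C + B * D := by
  have h1 : |a * c + b * d| ≤ |a * c| + |b * d| := abs_add_le _ _
  rw [abs_mul, abs_mul] at h1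
  have h2 : |a| * |c| ≤ A * C :=
    mul_le_mul ha hc (abs_nonneg c) ((abs_nonneg a).trans ha)
  have h3 : |b| * |d| ≤ B * D :=
    mul_le_mul hb hd (abs_nonneg d) ((abs_nonneg b).trans hb)
  linarith

end Aux


theorem krawczyk_existence (F : (Fin n → ℂ) → Fin n → ℂ) (hF : IsPolyMap F)
    (IV : Fin n → Set ℂ) (hIV : ∀ j, IsRect (IV j))
    (x : Fin n → ℂ) (hx : x ∈ boxSet IV)
    (Y : Matrix (Fin n) (Fin n) ℂ) (hY : IsUnit Y)
    (FX : Fin n → Set ℂ) (hFXr : ∀ j, IsRect (FX j)) (hFX : ∀ j, F x j ∈ FX j)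
    (MJ : Fin n → Fin n → Set ℂ) (hMJr : ∀ i j, IsRect (MJ i j))
    (hMJ : ∀ z ∈ boxSet IV, ∀ i j, jac F z i j ∈ MJ i j)
    (hK : ∀ i, Kset x Y FX MJ IV i ⊆ IV i) :
    ∃ z ∈ boxSet IV, F z = 0 := by
  classical
  choose aR bR aI bI hab hcd hIVE using hIV
  set uR : Fin n → ℝ := fun i => bR i - aR i with huRdef
  set uI : Fin n → ℝ := fun i => bI i - aI i with huIdef
  have hIVrect : ∀ j, IsRect (IV j) := fun j => ⟨_, _, _, _, hab j, hcd j, hIVE j⟩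
  have hIVcpt : ∀ j, Cpt (IV j) := fun j => Cpt.rect (hIVrect j)
  have hBcpt : ∀ i j, Cpt (Bmat Y MJ i j) := fun i j =>
    (Cpt.singleton _).subS (Cpt.sum fun k _ => (Cpt.singleton _).cmul (Cpt.rect (hMJr k j)))
  have hreIV : ∀ j, reS (IV j) = Set.Icc (aR j) (bR j) := fun j => by
    rw [hIVE j]; exact reS_cI (Set.nonempty_Icc.2 (hcd j))
  have himIV : ∀ j, imS (IV j) = Set.Icc (aI j) (bI j) := fun j => by
    rw [hIVE j]; exact imS_cI (Set.nonempty_Icc.2 (hab j))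
  have huR0 : ∀ j, 0 ≤ uR j := fun j => sub_nonneg.2 (hab j)
  have huI0 : ∀ j, 0 ≤ uI j := fun j => sub_nonneg.2 (hcd j)
  have hT1cpt : ∀ i, Cpt (({x i} : Set ℂ) - ∑ j, cmul {Y i j} (FX j)) := fun i =>
    (Cpt.singleton _).subS (Cpt.sum fun j _ => (Cpt.singleton _).cmul (Cpt.rect (hFXr j)))
  have hSj : ∀ j, Cpt ((IV j) - ({x j} : Set ℂ)) := fun j => (hIVcpt j).subS (Cpt.singleton _)
  have hCj : ∀ i j, Cpt (cmul ((IV j) - {x j}) (Bmat Y MJ i j)) := fun i j =>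
    (hSj j).cmul (hBcpt i j)
  have hKcpt : ∀ i, Cpt (Kset x Y FX MJ IV i) := fun i =>
    (hT1cpt i).addS (Cpt.sum fun j _ => hCj i j)
  -- widths of re/im of IV j - {x j}
  have hwre : ∀ j, uR j ≤ wid (reS ((IV j) - {x j})) := by
    intro j
    rw [reS_sub, reS_singleton, hreIV j]
    have h := wid_sub_ge (S := Set.Icc (aR j) (bR j)) (T := {(x j).re})
      ⟨isCompact_Icc, Set.nonempty_Icc.2 (hab j)⟩ (Cpt.singleton _)
    rw [wid_singleton] at h
    have h2 : wid (Set.Icc (aR j) (bR j)) = uR j := by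
      rw [wid, csSup_Icc (hab j), csInf_Icc (hab j)]
    linarith
  have hwim : ∀ j, uI j ≤ wid (imS ((IV j) - {x j})) := by
    intro j
    rw [imS_sub, imS_singleton, himIV j]
    have h := wid_sub_ge (S := Set.Icc (aI j) (bI j)) (T := {(x j).im})
      ⟨isCompact_Icc, Set.nonempty_Icc.2 (hcd j)⟩ (Cpt.singleton _)
    rw [wid_singleton] at h
    have h2 : wid (Set.Icc (aI j) (bI j)) = uI j := by
      rw [wid, csSup_Icc (hcd j), csInf_Icc (hcd j)]
    linarith
  -- re/im parts of cmul
  have hreCj : ∀ i j, reS (cmul ((IV j) - {x j}) (Bmat Y MJ i j)) =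
      ssub (smul' (reS ((IV j) - {x j})) (reS (Bmat Y MJ i j)))
           (smul' (imS ((IV j) - {x j})) (imS (Bmat Y MJ i j))) := by
    intro i j
    exact reS_cI (((hSj j).reS.smul' (hBcpt i j).imS).sadd ((hSj j).imS.smul' (hBcpt i j).reS)).2
  have himCj : ∀ i j, imS (cmul ((IV j) - {x j}) (Bmat Y MJ i j)) =
      sadd (smul' (reS ((IV j) - {x j})) (imS (Bmat Y MJ i j)))
           (smul' (imS ((IV j) - {x j})) (reS (Bmat Y MJ i j))) := by
    intro i j
    exact imS_cI (((hSj j).reS.smul' (hBcpt i j).reS).ssub ((hSj j).imS.smul' (hBcpt i j).imS)).2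
  -- per-entry width lower bounds
  have hperR : ∀ i j, mag (reS (Bmat Y MJ i j)) * uR j + mag (imS (Bmat Y MJ i j)) * uI j
      ≤ wid (reS (cmul ((IV j) - {x j}) (Bmat Y MJ i j))) := by
    intro i j
    rw [hreCj i j]
    have h1 := wid_sub_ge ((hSj j).reS.smul' (hBcpt i j).reS) ((hSj j).imS.smul' (hBcpt i j).imS)
    have h2 := wid_mul_ge (hSj j).reS (hBcpt i j).reS
    have h3 := wid_mul_ge (hSj j).imS (hBcpt i j).imS
    have h4 : mag (reS (Bmat Y MJ i j)) * uR j
        ≤ mag (reS (Bmat Y MJ i j)) * wid (reS ((IV j) - {x j})) :=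
      mul_le_mul_of_nonneg_left (hwre j) (mag_nonneg (hBcpt i j).reS)
    have h5 : mag (imS (Bmat Y MJ i j)) * uI j
        ≤ mag (imS (Bmat Y MJ i j)) * wid (imS ((IV j) - {x j})) :=
      mul_le_mul_of_nonneg_left (hwim j) (mag_nonneg (hBcpt i j).imS)
    linarith
  have hperI : ∀ i j, mag (imS (Bmat Y MJ i j)) * uR j + mag (reS (Bmat Y MJ i j)) * uI j
      ≤ wid (imS (cmul ((IV j) - {x j}) (Bmat Y MJ i j))) := by
    intro i j
    rw [himCj i j]
    have h1 := wid_add_ge ((hSj j).reS.smul' (hBcpt i j).imS) ((hSj j).imS.smul' (hBcpt i j).reS)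
    have h2 := wid_mul_ge (hSj j).reS (hBcpt i j).imS
    have h3 := wid_mul_ge (hSj j).imS (hBcpt i j).reS
    have h4 : mag (imS (Bmat Y MJ i j)) * uR j
        ≤ mag (imS (Bmat Y MJ i j)) * wid (reS ((IV j) - {x j})) :=
      mul_le_mul_of_nonneg_left (hwre j) (mag_nonneg (hBcpt i j).imS)
    have h5 : mag (reS (Bmat Y MJ i j)) * uI j
        ≤ mag (reS (Bmat Y MJ i j)) * wid (imS ((IV j) - {x j})) :=
      mul_le_mul_of_nonneg_left (hwim j) (mag_nonneg (hBcpt i j).reS)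
    linarith
  -- row inequalities
  have rowR : ∀ i, ∑ j, (mag (reS (Bmat Y MJ i j)) * uR j + mag (imS (Bmat Y MJ i j)) * uI j)
      ≤ uR i := by
    intro i
    have hup : wid (reS (Kset x Y FX MJ IV i)) ≤ uR i := by
      have h1 : wid (reS (Kset x Y FX MJ IV i)) ≤ wid (reS (IV i)) :=
        wid_mono (hIVcpt i).reS ((hKcpt i).reS.2) (Set.image_mono (hK i))
      rw [hreIV i] at h1
      have h2 : wid (Set.Icc (aR i) (bR i)) = uR i := by
        rw [wid, csSup_Icc (hab i), csInf_Icc (hab i)]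
      rw [h2] at h1
      exact h1
    have hsplit : reS (Kset x Y FX MJ IV i) =
        reS (({x i} : Set ℂ) - ∑ j, cmul {Y i j} (FX j)) +
        ∑ j, reS (cmul ((IV j) - {x j}) (Bmat Y MJ i j)) := by
      unfold Kset
      rw [reS_add, reS_sum]
    have hlow1 := wid_add_ge (hT1cpt i).reS
      (Cpt.sum (s := Finset.univ) (f := fun j => reS (cmul ((IV j) - {x j}) (Bmat Y MJ i j)))
        fun j _ => (hCj i j).reS)
    rw [sadd_eq] at hlow1
    have hlow2 := wid_sum_ge (s := Finset.univ)
      (f := fun j => reS (cmul ((IV j) - {x j}) (Bmat Y MJ i j)))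
      (fun j _ => (hCj i j).reS)
    have hT1w := wid_nonneg (hT1cpt i).reS
    have hsum := Finset.sum_le_sum (fun j (_ : j ∈ Finset.univ) => hperR i j)
    rw [hsplit] at hup
    linarith
  have rowI : ∀ i, ∑ j, (mag (imS (Bmat Y MJ i j)) * uR j + mag (reS (Bmat Y MJ i j)) * uI j)
      ≤ uI i := by
    intro i
    have hup : wid (imS (Kset x Y FX MJ IV i)) ≤ uI i := by
      have h1 : wid (imS (Kset x Y FX MJ IV i)) ≤ wid (imS (IV i)) :=
        wid_mono (hIVcpt i).imS ((hKcpt i).imS.2) (Set.image_mono (hK i))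
      rw [himIV i] at h1
      have h2 : wid (Set.Icc (aI i) (bI i)) = uI i := by
        rw [wid, csSup_Icc (hcd i), csInf_Icc (hcd i)]
      rw [h2] at h1
      exact h1
    have hsplit : imS (Kset x Y FX MJ IV i) =
        imS (({x i} : Set ℂ) - ∑ j, cmul {Y i j} (FX j)) +
        ∑ j, imS (cmul ((IV j) - {x j}) (Bmat Y MJ i j)) := by
      unfold Kset
      rw [imS_add, imS_sum]
    have hlow1 := wid_add_ge (hT1cpt i).imS
      (Cpt.sum (s := Finset.univ) (f := fun j => imS (cmul ((IV j) - {x j}) (Bmat Y MJ i j)))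
        fun j _ => (hCj i j).imS)
    rw [sadd_eq] at hlow1
    have hlow2 := wid_sum_ge (s := Finset.univ)
      (f := fun j => imS (cmul ((IV j) - {x j}) (Bmat Y MJ i j)))
      (fun j _ => (hCj i j).imS)
    have hT1w := wid_nonneg (hT1cpt i).imS
    have hsum := Finset.sum_le_sum (fun j (_ : j ∈ Finset.univ) => hperI i j)
    rw [hsplit] at hup
    linarith
  -- the Newton-like operator
  set G : (Fin n → ℂ) → Fin n → ℂ := fun z i => z i - ∑ j, Y i j * F z j with hGdef
  have hNB : ∀ (M : Matrix (Fin n) (Fin n) ℂ), (∀ i j, M i j ∈ MJ i j) →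
      ∀ i j, (1 - Y * M) i j ∈ Bmat Y MJ i j := by
    intro M hM i j
    have : (1 - Y * M) i j = (if i = j then (1:ℂ) else 0) - ∑ k, Y i k * M k j := by
      rw [Matrix.sub_apply, Matrix.one_apply, Matrix.mul_apply]
    rw [this]
    exact Set.sub_mem_sub rfl (mem_sum_sets fun k _ => cmul_mem rfl (hM k j))
  have hGmem : ∀ z ∈ boxSet IV, G z ∈ boxSet IV := by
    intro z hz i
    apply hK i
    obtain ⟨M, hM1, hM2⟩ := mvt_matrix hF hIVrect hMJr hMJ hz hx
    have hrepr : G z i = (x i - ∑ j, Y i j * F x j) +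
        ∑ j, (z j - x j) * ((1 - Y * M) i j) :=
      G_repr Y M (fun j => F z j) (fun j => F x j) z x hM2 i
    rw [hrepr]
    apply Set.add_mem_add
    · exact Set.sub_mem_sub rfl (mem_sum_sets fun j _ => cmul_mem rfl (hFX j))
    · exact mem_sum_sets fun j _ =>
        cmul_mem (Set.sub_mem_sub (hz j) rfl) (hNB M hM1 i j)
  -- base estimate
  have hbase : ∀ z ∈ boxSet IV, ∀ w ∈ boxSet IV, ∀ j,
      |(z j - w j).re| ≤ uR j ∧ |(z j - w j).im| ≤ uI j := by
    intro z hz w hw j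
    have h1 := hz j; have h2 := hw j
    rw [hIVE j] at h1 h2
    obtain ⟨h3, h4⟩ := Set.mem_Icc.1 h1.1
    obtain ⟨h5, h6⟩ := Set.mem_Icc.1 h1.2
    obtain ⟨h7, h8⟩ := Set.mem_Icc.1 h2.1
    obtain ⟨h9, h10⟩ := Set.mem_Icc.1 h2.2
    constructor
    · rw [Complex.sub_re, abs_le]; constructor <;> simp [huRdef] <;> linarith
    · rw [Complex.sub_im, abs_le]; constructor <;> simp [huIdef] <;> linarith
  -- contraction estimate
  have hcontr : ∀ z ∈ boxSet IV, ∀ w ∈ boxSet IV, ∀ r : ℝ, 0 ≤ r →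
      (∀ j, |(z j - w j).re| ≤ r * uR j ∧ |(z j - w j).im| ≤ r * uI j) →
      ∀ i, |(G z i - G w i).re| ≤ r * uR i ∧ |(G z i - G w i).im| ≤ r * uI i := by
    intro z hz w hw r hr hb i
    obtain ⟨M, hM1, hM2⟩ := mvt_matrix hF hIVrect hMJr hMJ hz hw
    have hrepr : G z i = (w i - ∑ j, Y i j * F w j) +
        ∑ j, (z j - w j) * ((1 - Y * M) i j) :=
      G_repr Y M (fun j => F z j) (fun j => F w j) z w hM2 i
    have hdiff : G z i - G w i = ∑ j, (z j - w j) * ((1 - Y * M) i j) := by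
      rw [hrepr, hGdef]; ring
    have hN : ∀ k j, |((1 - Y * M) k j).re| ≤ mag (reS (Bmat Y MJ k j)) ∧
        |((1 - Y * M) k j).im| ≤ mag (imS (Bmat Y MJ k j)) := by
      intro k j
      have hmem := hNB M hM1 k j
      exact ⟨abs_le_mag (hBcpt k j).reS ⟨_, hmem, rfl⟩,
        abs_le_mag (hBcpt k j).imS ⟨_, hmem, rfl⟩⟩
    constructor
    · rw [hdiff, Complex.re_sum]
      calc |∑ j, ((z j - w j) * ((1 - Y * M) i j)).re|
          ≤ ∑ j, |((z j - w j) * ((1 - Y * M) i j)).re| := Finset.abs_sum_le_sum_abs _ _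
        _ ≤ ∑ j, (r * uR j * mag (reS (Bmat Y MJ i j)) +
              r * uI j * mag (imS (Bmat Y MJ i j))) := by
            apply Finset.sum_le_sum
            intro j _
            rw [Complex.mul_re]
            exact abs_mul_sub_mul_le (hb j).1 (hb j).2 (hN i j).1 (hN i j).2
        _ = r * ∑ j, (mag (reS (Bmat Y MJ i j)) * uR j + mag (imS (Bmat Y MJ i j)) * uI j) := by
            rw [Finset.mul_sum]
            exact Finset.sum_congr rfl fun j _ => by ring
        _ ≤ r * uR i := mul_le_mul_of_nonneg_left (rowR i) hr
    · rw [hdiff, Complex.im_sum]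
      calc |∑ j, ((z j - w j) * ((1 - Y * M) i j)).im|
          ≤ ∑ j, |((z j - w j) * ((1 - Y * M) i j)).im| := Finset.abs_sum_le_sum_abs _ _
        _ ≤ ∑ j, (r * uR j * mag (imS (Bmat Y MJ i j)) +
              r * uI j * mag (reS (Bmat Y MJ i j))) := by
            apply Finset.sum_le_sum
            intro j _
            rw [Complex.mul_im]
            exact abs_mul_add_mul_le (hb j).1 (hb j).2 (hN i j).2 (hN i j).1
        _ = r * ∑ j, (mag (imS (Bmat Y MJ i j)) * uR j + mag (reS (Bmat Y MJ i j)) * uI j) := by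
            rw [Finset.mul_sum]
            exact Finset.sum_congr rfl fun j _ => by ring
        _ ≤ r * uI i := mul_le_mul_of_nonneg_left (rowI i) hr
  -- topology of the box
  have hboxclosed : IsClosed (boxSet IV) := by
    have h : boxSet IV = ⋂ j, (fun z : Fin n → ℂ => z j) ⁻¹' (IV j) := by
      ext z; simp [boxSet]
    rw [h]
    exact isClosed_iInter fun j => ((hIVcpt j).1.isClosed).preimage (continuous_apply j)
  have hboxcompact : IsCompact (boxSet IV) := by
    have h : boxSet IV = Set.pi Set.univ IV := by
      ext z; simp [boxSet, Set.mem_pi]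
    rw [h]; exact isCompact_univ_pi fun j => (hIVcpt j).1
  have hFc : ∀ i, Continuous fun z => F z i := by
    intro i; obtain ⟨p, hp⟩ := hF i
    exact (continuous_eval p).congr fun z => (hp z).symm
  have hGc : Continuous G := by
    rw [hGdef]
    exact continuous_pi fun i => (continuous_apply i).sub
      (continuous_finset_sum _ fun j _ => continuous_const.mul (hFc j))
  -- fixed points of the damped maps
  have hfix : ∀ t : ℝ, 0 ≤ t → t < 1 → ∃ L ∈ boxSet IV, L = x + t • (G L - x) := by
    intro t ht0 ht1
    set Gt : (Fin n → ℂ) → Fin n → ℂ := fun z => x + t • (G z - x) with hGtdef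
    have hGtmem : ∀ z ∈ boxSet IV, Gt z ∈ boxSet IV := fun z hz =>
      seg_mem_box hIVrect (hGmem z hz) hx ⟨ht0, le_of_lt ht1⟩
    have hGtdiff : ∀ z w : Fin n → ℂ, ∀ i, Gt z i - Gt w i = t • (G z i - G w i) := by
      intro z w i
      simp only [hGtdef, Pi.add_apply, Pi.smul_apply, Pi.sub_apply]
      rw [Complex.real_smul, Complex.real_smul, Complex.real_smul]
      ring
    set a : ℕ → Fin n → ℂ := fun m => Gt^[m] x with hadef
    have haS : ∀ m, a (m + 1) = Gt (a m) := fun m => Function.iterate_succ_apply' Gt m x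
    have hamem : ∀ m, a m ∈ boxSet IV := by
      intro m; induction m with
      | zero => exact hx
      | succ m ih => rw [haS]; exact hGtmem _ ih
    have hest : ∀ m, ∀ i, |(a (m+1) i - a m i).re| ≤ t ^ m * uR i ∧
        |(a (m+1) i - a m i).im| ≤ t ^ m * uI i := by
      intro m
      induction m with
      | zero =>
        intro i
        have h := hbase (a 1) (hamem 1) (a 0) (hamem 0) i
        simpa using h
      | succ m ih =>
        intro i
        have hc := hcontr (a (m+1)) (hamem _) (a m) (hamem _) (t ^ m)
          (pow_nonneg ht0 m) (fun j => ih j) i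
        have he : a (m+1+1) i - a (m+1) i = t • (G (a (m+1)) i - G (a m) i) := by
          rw [haS (m+1), haS m]
          exact hGtdiff _ _ i
        constructor
        · rw [he, Complex.smul_re, smul_eq_mul, abs_mul, abs_of_nonneg ht0, pow_succ]
          calc t * |(G (a (m+1)) i - G (a m) i).re| ≤ t * (t ^ m * uR i) :=
              mul_le_mul_of_nonneg_left hc.1 ht0
            _ = t ^ m * t * uR i := by ring
        · rw [he, Complex.smul_im, smul_eq_mul, abs_mul, abs_of_nonneg ht0, pow_succ]
          calc t * |(G (a (m+1)) i - G (a m) i).im| ≤ t * (t ^ m * uI i) :=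
              mul_le_mul_of_nonneg_left hc.2 ht0
            _ = t ^ m * t * uI i := by ring
    set Cc : ℝ := ∑ i, (uR i + uI i) with hCcdef
    have hCc0 : 0 ≤ Cc := Finset.sum_nonneg fun i _ => add_nonneg (huR0 i) (huI0 i)
    have hdist : ∀ m, dist (a m) (a (m+1)) ≤ Cc * t ^ m := by
      intro m
      rw [dist_eq_norm]
      have h0 : 0 ≤ Cc * t ^ m := mul_nonneg hCc0 (pow_nonneg ht0 m)
      rw [pi_norm_le_iff_of_nonneg h0]
      intro i
      have h1 := hest m i
      have h2 : ‖(a m - a (m+1)) i‖ ≤ |(a (m+1) i - a m i).re| + |(a (m+1) i - a m i).im| := by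
        rw [Pi.sub_apply]
        have h3 := Complex.norm_le_abs_re_add_abs_im (a m i - a (m+1) i)
        have h4 : (a m i - a (m+1) i).re = -((a (m+1) i - a m i).re) := by
          simp [Complex.sub_re]
        have h5 : (a m i - a (m+1) i).im = -((a (m+1) i - a m i).im) := by
          simp [Complex.sub_im]
        rw [h4, h5, abs_neg, abs_neg] at h3
        exact h3
      have h6 : uR i + uI i ≤ Cc :=
        Finset.single_le_sum (fun i (_ : i ∈ Finset.univ) => add_nonneg (huR0 i) (huI0 i))
          (Finset.mem_univ i)
      have h7 : 0 ≤ t ^ m := pow_nonneg ht0 m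
      nlinarith [h1.1, h1.2]
    have hcauchy := cauchySeq_of_le_geometric t Cc ht1 hdist
    obtain ⟨L, hL⟩ := cauchySeq_tendsto_of_complete hcauchy
    have hLbox : L ∈ boxSet IV :=
      hboxclosed.mem_of_tendsto hL (Filter.Eventually.of_forall hamem)
    have hGtc : Continuous Gt := by
      rw [hGtdef]
      exact continuous_const.add ((hGc.sub continuous_const).const_smul t)
    have h1 : Filter.Tendsto (fun m => a (m+1)) Filter.atTop (nhds L) := by
      have := hL.comp (Filter.tendsto_add_atTop_nat 1)
      exact this
    have h2 : Filter.Tendsto (fun m => Gt (a m)) Filter.atTop (nhds (Gt L)) :=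
      (hGtc.tendsto L).comp hL
    have h2' : Filter.Tendsto (fun m => a (m+1)) Filter.atTop (nhds (Gt L)) := by
      simpa only [← haS] using h2
    have h3 : Gt L = L := tendsto_nhds_unique h2' h1
    exact ⟨L, hLbox, h3.symm⟩
  -- pass to the limit t → 1
  set tk : ℕ → ℝ := fun k => 1 - 1/(k+1) with htkdef
  have htk0 : ∀ k, 0 ≤ tk k := by
    intro k
    have h1 : 1/((k:ℝ)+1) ≤ 1 := by
      rw [div_le_one (by positivity)]
      linarith [Nat.cast_nonneg (α := ℝ) k]
    simp only [htkdef]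
    linarith
  have htk1 : ∀ k, tk k < 1 := by
    intro k
    have h1 : 0 < 1/((k:ℝ)+1) := by positivity
    simp only [htkdef]
    linarith
  choose zk hzk1 hzk2 using fun k => hfix (tk k) (htk0 k) (htk1 k)
  obtain ⟨aL, haL, φ, hφ, hta⟩ := hboxcompact.tendsto_subseq hzk1
  have htklim : Filter.Tendsto tk Filter.atTop (nhds 1) := by
    have h1 := Filter.Tendsto.const_sub (1:ℝ) tendsto_one_div_add_atTop_nhds_zero_nat
    simpa [htkdef] using h1
  have htkφ : Filter.Tendsto (fun k => tk (φ k)) Filter.atTop (nhds 1) :=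
    htklim.comp hφ.tendsto_atTop
  have hrhs : Filter.Tendsto (fun k => x + tk (φ k) • (G (zk (φ k)) - x))
      Filter.atTop (nhds (x + (1:ℝ) • (G aL - x))) := by
    apply Filter.Tendsto.const_add
    exact htkφ.smul (((hGc.tendsto aL).comp hta).sub tendsto_const_nhds)
  have hlhs : Filter.Tendsto (fun k => zk (φ k)) Filter.atTop (nhds aL) := hta
  have heq : (fun k => zk (φ k)) = fun k => x + tk (φ k) • (G (zk (φ k)) - x) :=
    funext fun k => hzk2 (φ k)
  have hAeq : aL = x + (1:ℝ) • (G aL - x) := by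
    apply tendsto_nhds_unique _ hrhs
    rw [← heq]
    exact hlhs
  have hGa : G aL = aL := by
    rw [one_smul] at hAeq
    have h2 : x + (G aL - x) = G aL := by abel
    rw [← h2]
    exact hAeq.symm
  have hzero : ∀ i, ∑ j, Y i j * F aL j = 0 := by
    intro i
    have h := congrFun hGa i
    rw [hGdef] at h
    exact sub_eq_self.mp h
  refine ⟨aL, haL, ?_⟩
  have hmv : Y.mulVec (F aL) = 0 := funext fun i => by
    simpa [Matrix.mulVec, dotProduct] using hzero i
  have hdet : IsUnit Y.det := (Matrix.isUnit_iff_isUnit_det Y).1 hY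
  calc F aL = (1 : Matrix (Fin n) (Fin n) ℂ).mulVec (F aL) := (Matrix.one_mulVec _).symm
    _ = (Y⁻¹ * Y).mulVec (F aL) := by rw [Matrix.nonsing_inv_mul Y hdet]
    _ = Y⁻¹.mulVec (Y.mulVec (F aL)) := (Matrix.mulVec_mulVec _ _ _).symm
    _ = 0 := by rw [hmv, Matrix.mulVec_zero]
end
end

section
/- (Contraction estimate) Let F : ℂⁿ → ℂⁿ be polynomial, I ∈ 𝕀ℂⁿ an interval vector, Y ∈ ℂ^{n×n}, and G_Y(x) = x − Y·F(x). Then for all z₀, z₁ ∈ I: ‖G_Y(z₀) − G_Y(z₁)‖_∞ ≤ √2 · ‖1ₙ − Y·□JF(I)‖_∞ · ‖z₀ − z₁‖_∞. -/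
open Set Pointwise

noncomputable section

variable {n : ℕ}

def SBdd (S : Set ℂ) : Prop := ∃ C : ℝ, 0 ≤ C ∧ ∀ z ∈ S, ‖z‖ ≤ C
def RBdd (S : Set ℝ) : Prop := ∃ C : ℝ, 0 ≤ C ∧ ∀ x ∈ S, |x| ≤ C

lemma sbdd_singleton (a : ℂ) : SBdd {a} := ⟨‖a‖, norm_nonneg a, by rintro z rfl; exact le_rfl⟩

lemma rbdd_reS {S : Set ℂ} (h : SBdd S) : RBdd (reS S) := by
  obtain ⟨C, hC0, hC⟩ := h
  refine ⟨C, hC0, ?_⟩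
  rintro x ⟨z, hz, rfl⟩
  exact le_trans (Complex.abs_re_le_norm z) (by simpa using hC z hz)

lemma rbdd_imS {S : Set ℂ} (h : SBdd S) : RBdd (imS S) := by
  obtain ⟨C, hC0, hC⟩ := h
  refine ⟨C, hC0, ?_⟩
  rintro x ⟨z, hz, rfl⟩
  exact le_trans (Complex.abs_im_le_norm z) (by simpa using hC z hz)

lemma rbdd_sadd {X Y : Set ℝ} (hX : RBdd X) (hY : RBdd Y) : RBdd (sadd X Y) := by
  obtain ⟨C, hC0, hC⟩ := hX; obtain ⟨D, hD0, hD⟩ := hY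
  refine ⟨C + D, by positivity, ?_⟩
  rintro x ⟨a, ha, b, hb, rfl⟩
  exact le_trans (abs_add_le a b) (add_le_add (hC a ha) (hD b hb))

lemma rbdd_ssub {X Y : Set ℝ} (hX : RBdd X) (hY : RBdd Y) : RBdd (ssub X Y) := by
  obtain ⟨C, hC0, hC⟩ := hX; obtain ⟨D, hD0, hD⟩ := hY
  refine ⟨C + D, by positivity, ?_⟩
  rintro x ⟨a, ha, b, hb, rfl⟩
  exact le_trans (abs_sub a b) (add_le_add (hC a ha) (hD b hb))

lemma rbdd_smul' {X Y : Set ℝ} (hX : RBdd X) (hY : RBdd Y) : RBdd (smul' X Y) := by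
  obtain ⟨C, hC0, hC⟩ := hX; obtain ⟨D, hD0, hD⟩ := hY
  refine ⟨C * D, by positivity, ?_⟩
  rintro x ⟨a, ha, b, hb, rfl⟩
  rw [abs_mul]
  exact mul_le_mul (hC a ha) (hD b hb) (abs_nonneg b) hC0

lemma sbdd_cI {X Y : Set ℝ} (hX : RBdd X) (hY : RBdd Y) : SBdd (cI X Y) := by
  obtain ⟨C, hC0, hC⟩ := hX; obtain ⟨D, hD0, hD⟩ := hY
  refine ⟨C + D, by positivity, ?_⟩
  rintro z ⟨h1, h2⟩
  exact le_trans (Complex.norm_le_abs_re_add_abs_im z) (add_le_add (hC _ h1) (hD _ h2))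

lemma sbdd_cmul {S T : Set ℂ} (hS : SBdd S) (hT : SBdd T) : SBdd (cmul S T) :=
  sbdd_cI (rbdd_ssub (rbdd_smul' (rbdd_reS hS) (rbdd_reS hT))
      (rbdd_smul' (rbdd_imS hS) (rbdd_imS hT)))
    (rbdd_sadd (rbdd_smul' (rbdd_reS hS) (rbdd_imS hT))
      (rbdd_smul' (rbdd_imS hS) (rbdd_reS hT)))

lemma sbdd_rect {S : Set ℂ} (h : IsRect S) : SBdd S := by
  obtain ⟨a, b, c, d, _, _, rfl⟩ := h
  refine sbdd_cI ⟨max |a| |b|, le_max_of_le_left (abs_nonneg a), ?_⟩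
    ⟨max |c| |d|, le_max_of_le_left (abs_nonneg c), ?_⟩
  · intro x hx
    exact abs_le_max_abs_abs hx.1 hx.2
  · intro x hx
    exact abs_le_max_abs_abs hx.1 hx.2

lemma sbdd_sub {S T : Set ℂ} (hS : SBdd S) (hT : SBdd T) : SBdd (S - T) := by
  obtain ⟨C, hC0, hC⟩ := hS; obtain ⟨D, hD0, hD⟩ := hT
  refine ⟨C + D, by positivity, ?_⟩
  rintro z ⟨a, ha, b, hb, rfl⟩
  exact le_trans (norm_sub_le a b) (add_le_add (hC a ha) (hD b hb))

lemma sbdd_add {S T : Set ℂ} (hS : SBdd S) (hT : SBdd T) : SBdd (S + T) := by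
  obtain ⟨C, hC0, hC⟩ := hS; obtain ⟨D, hD0, hD⟩ := hT
  refine ⟨C + D, by positivity, ?_⟩
  rintro z ⟨a, ha, b, hb, rfl⟩
  exact le_trans (norm_add_le a b) (add_le_add (hC a ha) (hD b hb))

lemma sbdd_sum {ι : Type*} (s : Finset ι) (f : ι → Set ℂ) (h : ∀ i ∈ s, SBdd (f i)) :
    SBdd (∑ i ∈ s, f i) := by
  classical
  induction s using Finset.induction_on with
  | empty => refine ⟨0, le_refl 0, ?_⟩; intro z hz; simp only [Finset.sum_empty, Set.mem_zero] at hz; simp [hz]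
  | @insert a s hnot ih =>
    rw [Finset.sum_insert hnot]
    exact sbdd_add (h _ (Finset.mem_insert_self _ _))
      (ih fun i hi => h i (Finset.mem_insert_of_mem hi))


lemma sbdd_Bmat (Y : Matrix (Fin n) (Fin n) ℂ) (MJ : Fin n → Fin n → Set ℂ)
    (hMJr : ∀ i j, IsRect (MJ i j)) (i j : Fin n) : SBdd (Bmat Y MJ i j) :=
  sbdd_sub (sbdd_singleton _)
    (sbdd_sum _ _ fun k _ => sbdd_cmul (sbdd_singleton _) (sbdd_rect (hMJr k j)))

lemma mulVec_norm_le (M : Matrix (Fin n) (Fin n) ℂ) (v : Fin n → ℂ) :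
    ‖M.mulVec v‖ ≤ (∑ i, ∑ j, ‖M i j‖) * ‖v‖ := by
  have hnn : (0:ℝ) ≤ (∑ i, ∑ j, ‖M i j‖) * ‖v‖ := by positivity
  rw [pi_norm_le_iff_of_nonneg hnn]
  intro i
  calc ‖M.mulVec v i‖ = ‖∑ j, M i j * v j‖ := by simp [Matrix.mulVec, dotProduct]
    _ ≤ ∑ j, ‖M i j * v j‖ := norm_sum_le _ _
    _ ≤ ∑ j, ‖M i j‖ * ‖v‖ := by
        refine Finset.sum_le_sum fun j _ => ?_
        rw [norm_mul]
        exact mul_le_mul_of_nonneg_left (norm_le_pi_norm v j) (norm_nonneg _)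
    _ = (∑ j, ‖M i j‖) * ‖v‖ := (Finset.sum_mul _ _ _).symm
    _ ≤ (∑ i, ∑ j, ‖M i j‖) * ‖v‖ := by
        refine mul_le_mul_of_nonneg_right ?_ (norm_nonneg v)
        exact Finset.single_le_sum (f := fun i => ∑ j, ‖M i j‖)
          (fun i _ => by positivity) (Finset.mem_univ i)

lemma opNormInf_le (M : Matrix (Fin n) (Fin n) ℂ) {C : ℝ} (hC : 0 ≤ C)
    (h : ∀ v : Fin n → ℂ, ‖v‖ = 1 → ‖M.mulVec v‖ ≤ C) : opNormInf M ≤ C := by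
  refine Real.sSup_le ?_ hC
  rintro r ⟨v, hv, rfl⟩
  exact h v hv

lemma bddAbove_opSet (M : Matrix (Fin n) (Fin n) ℂ) :
    BddAbove {r | ∃ v : Fin n → ℂ, ‖v‖ = 1 ∧ r = ‖M.mulVec v‖} := by
  refine ⟨∑ i, ∑ j, ‖M i j‖, ?_⟩
  rintro r ⟨v, hv, rfl⟩
  simpa [hv] using mulVec_norm_le M v

lemma norm_mulVec_le_opNormInf (M : Matrix (Fin n) (Fin n) ℂ) (v : Fin n → ℂ) :
    ‖M.mulVec v‖ ≤ opNormInf M * ‖v‖ := by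
  by_cases hv : v = 0
  · simp [hv, Matrix.mulVec_zero]
  · have hnv : ‖v‖ ≠ 0 := norm_ne_zero_iff.mpr hv
    have hpos : (0:ℝ) < ‖v‖ := lt_of_le_of_ne (norm_nonneg v) (Ne.symm hnv)
    set c : ℂ := ((‖v‖ : ℝ) : ℂ)⁻¹ with hc
    have hcn : ‖c‖ = ‖v‖⁻¹ := by
      rw [hc, norm_inv, Complex.norm_real, Real.norm_eq_abs, abs_of_nonneg (norm_nonneg v)]
    have hu : ‖c • v‖ = 1 := by
      rw [norm_smul, hcn, inv_mul_cancel₀ hnv]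
    have h1 : ‖M.mulVec (c • v)‖ ≤ opNormInf M :=
      le_csSup (bddAbove_opSet M) ⟨c • v, hu, rfl⟩
    rw [Matrix.mulVec_smul, norm_smul, hcn] at h1
    calc ‖M.mulVec v‖ = ‖v‖ * (‖v‖⁻¹ * ‖M.mulVec v‖) := by
          field_simp
      _ ≤ ‖v‖ * opNormInf M := mul_le_mul_of_nonneg_left h1 (norm_nonneg v)
      _ = opNormInf M * ‖v‖ := mul_comm _ _

lemma opNormInf_le_imatNorm {B : Fin n → Fin n → Set ℂ} (hB : ∀ i j, SBdd (B i j))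
    {M : Matrix (Fin n) (Fin n) ℂ} (hM : ∀ i j, M i j ∈ B i j) :
    opNormInf M ≤ imatNorm B := by
  have hBC : ∀ i j, ∃ C : ℝ, 0 ≤ C ∧ ∀ z ∈ B i j, ‖z‖ ≤ C := hB
  choose C hC0 hC using hBC
  refine le_csSup ⟨∑ i, ∑ j, C i j, ?_⟩ ⟨M, hM, rfl⟩
  rintro r ⟨M', hM', rfl⟩
  refine opNormInf_le _ (Finset.sum_nonneg fun i _ => Finset.sum_nonneg fun j _ => hC0 i j) fun v hv => ?_
  calc ‖M'.mulVec v‖ ≤ (∑ i, ∑ j, ‖M' i j‖) * ‖v‖ := mulVec_norm_le M' v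
    _ = ∑ i, ∑ j, ‖M' i j‖ := by rw [hv, mul_one]
    _ ≤ ∑ i, ∑ j, C i j :=
        Finset.sum_le_sum fun i _ => Finset.sum_le_sum fun j _ => hC i j _ (hM' i j)

lemma mem_cmul_singleton {a b : ℂ} {T : Set ℂ} (hb : b ∈ T) : a * b ∈ cmul {a} T := by
  have hre : a.re ∈ reS {a} := ⟨a, rfl, rfl⟩
  have him : a.im ∈ imS {a} := ⟨a, rfl, rfl⟩
  have hbr : b.re ∈ reS T := ⟨b, hb, rfl⟩
  have hbi : b.im ∈ imS T := ⟨b, hb, rfl⟩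
  constructor
  · show (a * b).re ∈ ssub _ _
    rw [Complex.mul_re]
    exact Set.mem_image2_of_mem (Set.mem_image2_of_mem hre hbr)
      (Set.mem_image2_of_mem him hbi)
  · show (a * b).im ∈ sadd _ _
    rw [Complex.mul_im]
    exact Set.mem_image2_of_mem (Set.mem_image2_of_mem hre hbi)
      (Set.mem_image2_of_mem him hbr)

lemma one_sub_mem_Bmat (Y : Matrix (Fin n) (Fin n) ℂ) {MJ : Fin n → Fin n → Set ℂ}
    {J : Matrix (Fin n) (Fin n) ℂ} (hJ : ∀ k j, J k j ∈ MJ k j) (i j : Fin n) :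
    ((1 : Matrix (Fin n) (Fin n) ℂ) - Y * J) i j ∈ Bmat Y MJ i j := by
  have h : ((1 : Matrix (Fin n) (Fin n) ℂ) - Y * J) i j =
      (if i = j then (1:ℂ) else 0) - ∑ k, Y i k * J k j := by
    simp [Matrix.sub_apply, Matrix.one_apply, Matrix.mul_apply]
  rw [h]
  exact Set.sub_mem_sub (Set.mem_singleton _)
    (Set.finset_sum_mem_finset_sum _ _ _ fun k _ => mem_cmul_singleton (hJ k j))

lemma mvpoly_diff (p : MvPolynomial (Fin n) ℂ) :
    Differentiable ℂ (fun z : Fin n → ℂ => MvPolynomial.eval z p) := by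
  induction p using MvPolynomial.induction_on with
  | C a => simpa only [MvPolynomial.eval_C] using differentiable_const a
  | add p q hp hq => simpa only [MvPolynomial.eval_add] using hp.fun_add hq
  | mul_X p j hp =>
      simp only [MvPolynomial.eval_mul, MvPolynomial.eval_X]
      exact hp.mul (ContinuousLinearMap.proj (R := ℂ) (φ := fun _ : Fin n => ℂ) j).differentiable

lemma F_diff {F : (Fin n → ℂ) → Fin n → ℂ} (hF : IsPolyMap F) (i : Fin n) :
    Differentiable ℂ (fun w => F w i) := by
  obtain ⟨p, hp⟩ := hF i
  have h : (fun w => F w i) = fun w => MvPolynomial.eval w p := funext hp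
  rw [h]
  exact mvpoly_diff p

lemma fderiv_eq_mulVec (F : (Fin n → ℂ) → Fin n → ℂ) (z d : Fin n → ℂ) (i : Fin n) :
    fderiv ℂ (fun w => F w i) z d = (jac F z).mulVec d i := by
  have hd : d = ∑ j, d j • (Pi.single j (1:ℂ) : Fin n → ℂ) := by
    funext x
    simp [Finset.sum_apply, Pi.single_apply]
  conv_lhs => rw [hd]
  rw [map_sum]
  simp only [map_smul, smul_eq_mul]
  simp [jac, Matrix.mulVec, dotProduct, mul_comm]

theorem contraction_estimate (F : (Fin n → ℂ) → Fin n → ℂ) (hF : IsPolyMap F)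
    (IV : Fin n → Set ℂ) (hIV : ∀ j, IsRect (IV j))
    (Y : Matrix (Fin n) (Fin n) ℂ)
    (MJ : Fin n → Fin n → Set ℂ) (hMJr : ∀ i j, IsRect (MJ i j))
    (hMJ : ∀ z ∈ boxSet IV, ∀ i j, jac F z i j ∈ MJ i j)
    (z₀ z₁ : Fin n → ℂ) (hz₀ : z₀ ∈ boxSet IV) (hz₁ : z₁ ∈ boxSet IV) :
    ‖(z₀ - Y.mulVec (F z₀)) - (z₁ - Y.mulVec (F z₁))‖ ≤
      Real.sqrt 2 * imatNorm (Bmat Y MJ) * ‖z₀ - z₁‖ := by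
  classical
  rcases Nat.eq_zero_or_pos n with hn | hn
  · subst hn
    have h0 : ∀ v : Fin 0 → ℂ, v = 0 := fun v => funext fun i => i.elim0
    rw [h0 (z₀ - Y.mulVec (F z₀) - (z₁ - Y.mulVec (F z₁))), h0 (z₀ - z₁), norm_zero, mul_zero]
  set K := imatNorm (Bmat Y MJ) with hKdef
  set d : Fin n → ℂ := z₀ - z₁ with hddef
  set p : ℝ → (Fin n → ℂ) := fun t => z₁ + t • d with hpdef
  have hp : ∀ t : ℝ, HasDerivAt p d t := by
    intro t
    have h := ((hasDerivAt_id t).smul_const d).const_add z₁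
    simpa [hpdef] using h
  have hpmem : ∀ t ∈ Set.Icc (0:ℝ) 1, p t ∈ boxSet IV := by
    intro t ht j
    obtain ⟨a, b, c', d', _, _, hIVj⟩ := hIV j
    have h0 := hz₀ j; have h1 := hz₁ j
    rw [hIVj] at h0 h1 ⊢
    have hre : (p t j).re = (z₁ j).re + t • ((z₀ j).re - (z₁ j).re) := by
      simp [hpdef, hddef, Complex.add_re, Complex.sub_re, Complex.smul_re, smul_eq_mul]
    have him : (p t j).im = (z₁ j).im + t • ((z₀ j).im - (z₁ j).im) := by
      simp [hpdef, hddef, Complex.add_im, Complex.sub_im, Complex.smul_im, smul_eq_mul]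
    constructor
    · rw [hre]; exact (convex_Icc a b).add_smul_sub_mem h1.1 h0.1 ht
    · rw [him]; exact (convex_Icc c' d').add_smul_sub_mem h1.2 h0.2 ht
  -- derivative of components of G ∘ p
  have hG : ∀ (i : Fin n) (t : ℝ),
      HasDerivAt (fun s : ℝ => p s i - ∑ j, Y i j * F (p s) j)
        ((((1 : Matrix (Fin n) (Fin n) ℂ) - Y * jac F (p t)).mulVec d) i) t := by
    intro i t
    have h1 : HasDerivAt (fun s : ℝ => p s i) (d i) t :=
      (ContinuousLinearMap.proj (R := ℝ) (φ := fun _ : Fin n => ℂ)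
        i).hasFDerivAt.comp_hasDerivAt t (hp t)
    have h2 : ∀ j, HasDerivAt (fun s : ℝ => F (p s) j) ((jac F (p t)).mulVec d j) t := by
      intro j
      have hdF := (((F_diff hF j) (p t)).hasFDerivAt.restrictScalars ℝ).comp_hasDerivAt t (hp t)
      have heq : (ContinuousLinearMap.restrictScalars ℝ (fderiv ℂ (fun w => F w j) (p t))) d =
          (jac F (p t)).mulVec d j := fderiv_eq_mulVec F (p t) d j
      rwa [heq] at hdF
    have h3 : HasDerivAt (fun s : ℝ => ∑ j, Y i j * F (p s) j)
        (∑ j, Y i j * (jac F (p t)).mulVec d j) t :=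
      HasDerivAt.fun_sum fun j _ => (h2 j).const_mul (Y i j)
    have h4 := h1.sub h3
    have hval : d i - ∑ j, Y i j * (jac F (p t)).mulVec d j =
        (((1 : Matrix (Fin n) (Fin n) ℂ) - Y * jac F (p t)).mulVec d) i := by
      rw [Matrix.sub_mulVec, Matrix.one_mulVec, Pi.sub_apply,
        ← Matrix.mulVec_mulVec]
      simp [Matrix.mulVec, dotProduct]
    rwa [hval] at h4
  -- key bound via MVT
  have key : ∀ (L : ℂ →L[ℝ] ℝ), (∀ w : ℂ, |L w| ≤ ‖w‖) →
      ∀ i, |L ((z₀ - Y.mulVec (F z₀) - (z₁ - Y.mulVec (F z₁))) i)| ≤ K * ‖d‖ := by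
    intro L hL i
    set f : ℝ → ℝ := fun t => L (p t i - ∑ j, Y i j * F (p t) j) with hfdef
    have hf : ∀ t, HasDerivAt f
        (L ((((1 : Matrix (Fin n) (Fin n) ℂ) - Y * jac F (p t)).mulVec d) i)) t :=
      fun t => L.hasFDerivAt.comp_hasDerivAt t (hG i t)
    obtain ⟨c, hc, hceq⟩ := exists_hasDerivAt_eq_slope f
      (fun t => L ((((1 : Matrix (Fin n) (Fin n) ℂ) - Y * jac F (p t)).mulVec d) i))
      one_pos (fun x _ => (hf x).continuousAt.continuousWithinAt) (fun x _ => hf x)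
    have hp1 : p 1 = z₀ := by
      simp [hpdef, hddef]
    have hp0 : p 0 = z₁ := by simp [hpdef]
    have hcoord : ∀ w : Fin n → ℂ, (w - Y.mulVec (F w)) i = w i - ∑ j, Y i j * F w j := by
      intro w
      simp [Matrix.mulVec, dotProduct]
    have hval : f 1 - f 0 = L ((z₀ - Y.mulVec (F z₀) - (z₁ - Y.mulVec (F z₁))) i) := by
      rw [hfdef]
      simp only [hp1, hp0, ← hcoord, ← map_sub]
      congr 1
    have htarget : L ((z₀ - Y.mulVec (F z₀) - (z₁ - Y.mulVec (F z₁))) i) =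
        L ((((1 : Matrix (Fin n) (Fin n) ℂ) - Y * jac F (p c)).mulVec d) i) := by
      rw [← hval, hceq]
      norm_num
    rw [htarget]
    set M := (1 : Matrix (Fin n) (Fin n) ℂ) - Y * jac F (p c) with hMdef
    have hMmem : ∀ i' j', M i' j' ∈ Bmat Y MJ i' j' :=
      one_sub_mem_Bmat Y (fun k j => hMJ (p c) (hpmem c (Set.mem_Icc_of_Ioo hc)) k j)
    calc |L (M.mulVec d i)| ≤ ‖M.mulVec d i‖ := hL _
      _ ≤ ‖M.mulVec d‖ := norm_le_pi_norm _ i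
      _ ≤ opNormInf M * ‖d‖ := norm_mulVec_le_opNormInf M d
      _ ≤ K * ‖d‖ := by
          refine mul_le_mul_of_nonneg_right ?_ (norm_nonneg d)
          exact opNormInf_le_imatNorm (sbdd_Bmat Y MJ hMJr) hMmem
  have hre := key Complex.reCLM (fun w => by
    simpa using Complex.abs_re_le_norm w)
  have him := key Complex.imCLM (fun w => by
    simpa using Complex.abs_im_le_norm w)
  have hKd : 0 ≤ K * ‖d‖ := le_trans (abs_nonneg _) (hre ⟨0, hn⟩)
  rw [mul_assoc]
  have hnn : (0:ℝ) ≤ Real.sqrt 2 * (K * ‖d‖) :=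
    mul_nonneg (Real.sqrt_nonneg 2) hKd
  rw [show ‖z₀ - z₁‖ = ‖d‖ from rfl, pi_norm_le_iff_of_nonneg hnn]
  intro i
  set w := (z₀ - Y.mulVec (F z₀) - (z₁ - Y.mulVec (F z₁))) i with hwdef
  have hwre : |w.re| ≤ K * ‖d‖ := by have := hre i; rwa [Complex.reCLM_apply] at this
  have hwim : |w.im| ≤ K * ‖d‖ := by have := him i; rwa [Complex.imCLM_apply] at this
  calc ‖w‖ = Real.sqrt (w.re ^ 2 + w.im ^ 2) := by
        rw [Complex.norm_def, Complex.normSq_apply]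
        ring_nf
    _ ≤ Real.sqrt ((K * ‖d‖) ^ 2 + (K * ‖d‖) ^ 2) := by
        apply Real.sqrt_le_sqrt
        have h1 : w.re ^ 2 ≤ (K * ‖d‖) ^ 2 := by
          rw [← sq_abs w.re]
          exact pow_le_pow_left₀ (abs_nonneg _) hwre 2
        have h2 : w.im ^ 2 ≤ (K * ‖d‖) ^ 2 := by
          rw [← sq_abs w.im]
          exact pow_le_pow_left₀ (abs_nonneg _) hwim 2
        exact add_le_add h1 h2
    _ = Real.sqrt 2 * (K * ‖d‖) := by
        rw [← two_mul, Real.sqrt_mul (by norm_num : (0:ℝ) ≤ 2), Real.sqrt_sq hKd]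
end
end
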